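/- Let f : ℝ^d → ℝ^d be continuously differentiable with ‖Df(x)‖ ≤ c(1 + ‖x‖^c) for all x and some c > 0. Let 0 < h_min ≤ h_max with h_max = ρ·h_min for some ρ > 0, and let 0 < δ ≤ h_max. Let y ∈ ℝ^d and let h be a real number with h_min < h and h·(1 + ‖y‖^(1+c)) ≤ δ. Then ‖f(y)‖² ≤ (2c + ‖f(0)‖)²·ρ². -/

import Mathlib

theorem admissible_part_ii (d : ℕ)
    (f : EuclideanSpace ℝ (Fin d) → EuclideanSpace ℝ (Fin d))
    (hf : ContDiff ℝ 1 f) (c : ℝ) (hc : 0 < c)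
    (hDf : ∀ x, ‖fderiv ℝ f x‖ ≤ c * (1 + ‖x‖ ^ c))
    (hmin hmax ρ δ : ℝ)
    (hmin_pos : 0 < hmin) (hminmax : hmin ≤ hmax)
    (hρ : 0 < ρ) (hratio : hmax = ρ * hmin)
    (hδ_pos : 0 < δ) (hδ : δ ≤ hmax)
    (y : EuclideanSpace ℝ (Fin d)) (h : ℝ)
    (hh : hmin < h) (hstep : h * (1 + ‖y‖ ^ (1 + c)) ≤ δ) :
    ‖f y‖ ^ 2 ≤ (2 * c + ‖f 0‖) ^ 2 * ρ ^ 2 := by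
  have hny : (0:ℝ) ≤ ‖y‖ := norm_nonneg y
  -- mean value bound on closed ball of radius ‖y‖
  have hmv : ‖f y - f 0‖ ≤ c * (1 + ‖y‖ ^ c) * ‖y - 0‖ := by
    apply Convex.norm_image_sub_le_of_norm_fderiv_le
      (fun x _ => (hf.differentiable one_ne_zero).differentiableAt)
      (fun x hx => ?_) (convex_closedBall (0 : EuclideanSpace ℝ (Fin d)) ‖y‖)
      (by simp [Metric.mem_closedBall])
      (by simp [Metric.mem_closedBall])
    · refine le_trans (hDf x) ?_
      have hxle : ‖x‖ ≤ ‖y‖ := by simpa using Metric.mem_closedBall.mp hx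
      have : ‖x‖ ^ c ≤ ‖y‖ ^ c := Real.rpow_le_rpow (norm_nonneg x) hxle hc.le
      nlinarith
  have hyb : ‖y‖ ≤ 1 + ‖y‖ ^ (1 + c) := by
    rcases le_total ‖y‖ 1 with h1 | h1
    · have : (0:ℝ) ≤ ‖y‖ ^ (1 + c) := Real.rpow_nonneg hny _
      linarith
    · have : ‖y‖ ^ (1:ℝ) ≤ ‖y‖ ^ (1 + c) :=
        Real.rpow_le_rpow_of_exponent_le h1 (by linarith)
      rw [Real.rpow_one] at this
      linarith
  have hycb : ‖y‖ ^ c * ‖y‖ ≤ ‖y‖ ^ (1 + c) := by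
    rw [Real.rpow_add' hny (by positivity), Real.rpow_one]
    ring_nf
    exact le_refl _
  have hfy : ‖f y‖ ≤ (2 * c + ‖f 0‖) * (1 + ‖y‖ ^ (1 + c)) := by
    have h1 : ‖f y‖ ≤ ‖f 0‖ + ‖f y - f 0‖ := by
      have := norm_sub_norm_le (f y) (f 0); linarith [abs_le.mp (le_refl |‖f y‖ - ‖f 0‖|)]
    have h2 : ‖f y - f 0‖ ≤ c * (1 + ‖y‖ ^ c) * ‖y‖ := by simpa using hmv
    have hrnn : (0:ℝ) ≤ ‖y‖ ^ (1 + c) := Real.rpow_nonneg hny _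
    have hf0 : (0:ℝ) ≤ ‖f 0‖ := norm_nonneg _
    nlinarith
  have hρb : 1 + ‖y‖ ^ (1 + c) ≤ ρ := by
    have hrnn : (0:ℝ) ≤ ‖y‖ ^ (1 + c) := Real.rpow_nonneg hny _
    have hh' : hmin * (1 + ‖y‖ ^ (1 + c)) ≤ h * (1 + ‖y‖ ^ (1 + c)) := by nlinarith
    have : hmin * (1 + ‖y‖ ^ (1 + c)) ≤ ρ * hmin := by
      calc hmin * (1 + ‖y‖ ^ (1 + c)) ≤ h * (1 + ‖y‖ ^ (1 + c)) := hh'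
        _ ≤ δ := hstep
        _ ≤ hmax := hδ
        _ = ρ * hmin := hratio
    have := (mul_le_mul_iff_of_pos_right hmin_pos).mp (by linarith [this] : (1 + ‖y‖ ^ (1 + c)) * hmin ≤ ρ * hmin)
    exact this
  have hfy2 : ‖f y‖ ≤ (2 * c + ‖f 0‖) * ρ := by
    have hco : (0:ℝ) ≤ 2 * c + ‖f 0‖ := by positivity
    calc ‖f y‖ ≤ (2 * c + ‖f 0‖) * (1 + ‖y‖ ^ (1 + c)) := hfy
      _ ≤ (2 * c + ‖f 0‖) * ρ := by nlinarith [Real.rpow_nonneg hny (1+c)]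
  nlinarith [norm_nonneg (f y), norm_nonneg (f 0), hfy2]
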